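/- Let A be a real m×n matrix with columns F₁,…,Fₙ, let A⁺ be a Moore–Penrose pseudoinverse of A, and set S = Iₙ − A⁺·A. Let τ be a span-separated subset of column indices (span{F_j : j ∈ τ} ∩ span{F_i : i ∉ τ} = {0}), and suppose τ is partitioned into two nonempty disjoint subsets Y₁ and Y₂ (Y₁ ∪ Y₂ = τ) such that S_{i,j} = 0 for all i ∈ Y₁ and j ∈ Y₂. Then span{F_i : i ∈ Y₁} ∩ span{F_j : j ∈ Y₂} = {0}. -/

import Mathlib

open Matrix

/-- If a span-separated set `τ` of column indices is partitioned into nonempty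
disjoint subsets `Y₁, Y₂` with `S i j = 0` for all `i ∈ Y₁`, `j ∈ Y₂`, then the
spans of the corresponding column families intersect trivially. -/
theorem spans_disjoint_of_signature_zero_between
    {m n : ℕ} (A : Matrix (Fin m) (Fin n) ℝ) (Ap : Matrix (Fin n) (Fin m) ℝ)
    (h1 : A * Ap * A = A) (h2 : Ap * A * Ap = Ap)
    (h3 : (A * Ap)ᵀ = A * Ap) (h4 : (Ap * A)ᵀ = Ap * A)
    (S : Matrix (Fin n) (Fin n) ℝ) (hS : S = 1 - Ap * A)
    (τ : Set (Fin n))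
    (hsep : Submodule.span ℝ (Aᵀ '' τ) ⊓ Submodule.span ℝ (Aᵀ '' τᶜ) = ⊥)
    (Y₁ Y₂ : Set (Fin n)) (hne1 : Y₁.Nonempty) (hne2 : Y₂.Nonempty)
    (hdisj : Disjoint Y₁ Y₂) (hunion : Y₁ ∪ Y₂ = τ)
    (hzero : ∀ i ∈ Y₁, ∀ j ∈ Y₂, S i j = 0) :
    Submodule.span ℝ (Aᵀ '' Y₁) ⊓ Submodule.span ℝ (Aᵀ '' Y₂) = ⊥ := by
  -- Rewrite finite linear combinations of columns as matrix-vector products.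
  have key : ∀ l : Fin n →₀ ℝ, Finsupp.linearCombination ℝ Aᵀ l = A *ᵥ ⇑l := by
    intro l
    erw [Finsupp.linearCombination_apply, Finsupp.sum_fintype _ _ (by simp)]
    ext i
    simp [Matrix.mulVec, dotProduct, mul_comm]
  rw [eq_bot_iff]
  intro x hx
  rw [Submodule.mem_inf] at hx
  obtain ⟨hx1, hx2⟩ := hx
  erw [Finsupp.mem_span_image_iff_linearCombination] at hx1 hx2
  obtain ⟨cf, hcf, hcx⟩ := hx1
  obtain ⟨df, hdf, hdx⟩ := hx2
  rw [key] at hcx hdx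
  rw [Finsupp.mem_supported'] at hcf hdf
  set c : Fin n → ℝ := ⇑cf with hc
  set d : Fin n → ℝ := ⇑df with hd
  set P : Matrix (Fin n) (Fin n) ℝ := Ap * A with hP
  have hPP : P * P = P := by rw [hP, ← Matrix.mul_assoc, h2]
  have hAP : A * P = A := by rw [hP, ← Matrix.mul_assoc, h1]
  have hPt : Pᵀ = P := h4
  -- P c = P d
  have hAcd : A *ᵥ c = A *ᵥ d := hcx.trans hdx.symm
  have hPcd : P *ᵥ c = P *ᵥ d := by
    rw [hP, ← Matrix.mulVec_mulVec, ← Matrix.mulVec_mulVec, hAcd]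
  -- Entries of P vanish between Y₁ and Y₂.
  have hPij : ∀ i ∈ Y₁, ∀ j ∈ Y₂, P i j = 0 := by
    intro i hi j hj
    have hij : i ≠ j := fun h => (Set.disjoint_left.mp hdisj hi) (h ▸ hj)
    have := hzero i hi j hj
    rw [hS] at this
    have h1ij : (1 : Matrix (Fin n) (Fin n) ℝ) i j = 0 := Matrix.one_apply_ne hij
    have : (1 : Matrix (Fin n) (Fin n) ℝ) i j - P i j = 0 := this
    rw [h1ij] at this
    linarith
  -- c ⬝ᵥ (P *ᵥ d) = 0
  have hdot : c ⬝ᵥ (P *ᵥ d) = 0 := by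
    unfold dotProduct
    apply Finset.sum_eq_zero
    intro i _
    by_cases hi : i ∈ Y₁
    · have : (P *ᵥ d) i = 0 := by
        unfold Matrix.mulVec dotProduct
        apply Finset.sum_eq_zero
        intro j _
        show P i j * d j = 0
        by_cases hj : j ∈ Y₂
        · rw [hPij i hi j hj, zero_mul]
        · rw [hdf j hj, mul_zero]
      rw [this, mul_zero]
    · rw [hcf i hi, zero_mul]
  -- ⟨P c, P c⟩ = 0, hence P c = 0
  have hPc0 : P *ᵥ c = 0 := by
    rw [← dotProduct_self_eq_zero (v := P *ᵥ c)]
    calc (P *ᵥ c) ⬝ᵥ (P *ᵥ c)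
        = (c ᵥ* P) ⬝ᵥ (P *ᵥ c) := by
          rw [← hPt, Matrix.vecMul_transpose, hPt]
      _ = c ⬝ᵥ (P *ᵥ (P *ᵥ c)) := (Matrix.dotProduct_mulVec _ _ _).symm
      _ = c ⬝ᵥ ((P * P) *ᵥ c) := by rw [Matrix.mulVec_mulVec]
      _ = c ⬝ᵥ (P *ᵥ c) := by rw [hPP]
      _ = c ⬝ᵥ (P *ᵥ d) := by rw [hPcd]
      _ = 0 := hdot
  -- Conclude x = 0.
  have : x = A *ᵥ (P *ᵥ c) := by
    rw [Matrix.mulVec_mulVec, hAP, hcx]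
  rw [Submodule.mem_bot, this, hPc0, Matrix.mulVec_zero]
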